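/- (Theorem B, Stasyuk 2008.) For every strictly increasing sequence (μ_n) of positive reals with ∑_n 1/(μ_{n+1} − μ_n) < +∞ and every h ∈ L_+, there exist an entire Dirichlet series F ∈ D_a with |a_n| = e^{−μ_n}, a measurable set E ⊆ [0,∞), and a constant d > 0 such that M(x,F) ≥ (1+d) μ(x,F) and M(x,F) ≥ (1+d) m(x,F) for every x ∈ E, while ∫_{E ∩ [1,∞)} h(x) dx/x = +∞. -/

import Mathlib

open Filter MeasureTheory

/-- The value `F(x+iy) = ∑_{n=0}^∞ a_n e^{(x+iy)λ_n}` of the Dirichlet series. -/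
noncomputable def Fval (a : ℕ → ℂ) (lam : ℕ → ℝ) (x y : ℝ) : ℂ :=
  ∑' n : ℕ, a n * Complex.exp (((x : ℂ) + (y : ℂ) * Complex.I) * (lam n : ℂ))

set_option maxHeartbeats 4000000 in
/-- Theorem B (Stasyuk, 2008): for every strictly increasing positive sequence `(μ_n)`
with `∑ 1/(μ_{n+1} − μ_n) < +∞` and every `h ∈ L_+`, there are an entire Dirichlet
series `F ∈ D_a` with `|a_n| = e^{−μ_n}`, a measurable set `E ⊆ [0,∞)` and a constant
`d > 0` such that `M(x,F) ≥ (1+d) μ(x,F)` and `M(x,F) ≥ (1+d) m(x,F)` for all `x ∈ E`,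
while `E` has infinite logarithmic `h`-measure. -/
theorem stmt_18 (μ : ℕ → ℝ) (hμpos : ∀ n, 0 < μ n) (hμmono : StrictMono μ)
    (hsum : Summable fun n => 1 / (μ (n + 1) - μ n))
    (h : ℝ → ℝ) (hhpos : ∀ x ≥ (0 : ℝ), 0 < h x)
    (hhcont : ContinuousOn h (Set.Ici 0))
    (hhmono : StrictMonoOn h (Set.Ici 0))
    (hhinf : Tendsto h atTop atTop) :
    ∃ (a : ℕ → ℂ) (lam : ℕ → ℝ) (E : Set ℝ) (d : ℝ),
      (∀ n, ‖a n‖ = Real.exp (-μ n)) ∧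
      (∀ n m, n ≠ m → lam n ≠ lam m) ∧
      (∀ n, 0 ≤ lam n) ∧
      (∀ n, ∃ m, lam n < lam m) ∧
      (∀ x : ℝ, Summable fun n => ‖a n‖ * Real.exp (x * lam n)) ∧
      MeasurableSet E ∧ E ⊆ Set.Ici 0 ∧ 0 < d ∧
      (∀ x ∈ E,
        (1 + d) * (⨆ n : ℕ, ‖a n‖ * Real.exp (x * lam n)) ≤
            (⨆ y : ℝ, ‖Fval a lam x y‖) ∧
        (1 + d) * (⨅ y : ℝ, ‖Fval a lam x y‖) ≤
            (⨆ y : ℝ, ‖Fval a lam x y‖)) ∧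
      (∫⁻ x in E ∩ Set.Ici 1, ENNReal.ofReal (h x / x)) = ⊤ := by
  classical
  obtain ⟨δ, hδ⟩ : ∃ δ : ℕ → ℝ, ∀ k, δ k = μ (k + 1) - μ k := ⟨_, fun _ => rfl⟩
  have hδpos : ∀ k, 0 < δ k := fun k => by
    rw [hδ]; exact sub_pos.2 (hμmono k.lt_succ_self)
  obtain ⟨D, hD⟩ : ∃ D : ℕ → ℝ, ∀ k, D k = max (δ k) 2 := ⟨_, fun _ => rfl⟩
  have hD2 : ∀ k, 2 ≤ D k := fun k => (hD k) ▸ le_max_right _ _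
  have hDpos : ∀ k, 0 < D k := fun k => lt_of_lt_of_le two_pos (hD2 k)
  -- choose N with δ n ≥ 100 for n ≥ N, N ≥ 1
  obtain ⟨N₀, hN₀⟩ : ∃ N₀ : ℕ, ∀ n, N₀ ≤ n → 100 ≤ δ n := by
    have h1δ : Tendsto (fun k => 1 / δ k) atTop (nhds 0) := by
      have := hsum.tendsto_atTop_zero
      convert this using 2 with k
      rw [hδ]
    have hev : ∀ᶠ k in atTop, 1 / δ k < 1 / 100 :=
      h1δ.eventually (gt_mem_nhds (by norm_num))
    obtain ⟨N₀, hN₀⟩ := eventually_atTop.1 hev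
    refine ⟨N₀, fun n hn => ?_⟩
    have h1 := hN₀ n hn
    have h2 := hδpos n
    rw [div_lt_div_iff₀ h2 (by norm_num)] at h1
    linarith
  set N : ℕ := max N₀ 1 with hNdef
  have hN : ∀ n, N ≤ n → 100 ≤ δ n := fun n hn =>
    hN₀ n (le_trans (le_max_left _ _) hn)
  have hN1 : 1 ≤ N := le_max_right _ _
  have hDδ : ∀ n, N ≤ n → D n = δ n := fun n hn => by
    rw [hD]; exact max_eq_left (by linarith [hN n hn])
  -- recursive construction of centers c
  have hstep : ∀ (k : ℕ) (p : ℝ), 0 < p →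
      ∃ y : ℝ, (4 * (p + p / D k) + 4 ≤ y) ∧
        (2 * p + 2 * p / δ k * Real.log (8 * ((k : ℝ) + 2)) ≤ y) ∧
        (∀ u : ℝ, y / 2 ≤ u → D (k + 1) ≤ h u) := by
    intro k p hp
    obtain ⟨R, hR⟩ := eventually_atTop.1 (hhinf.eventually (eventually_ge_atTop (D (k + 1))))
    refine ⟨max (max (4 * (p + p / D k) + 4)
        (2 * p + 2 * p / δ k * Real.log (8 * ((k : ℝ) + 2)))) (2 * |R|), ?_, ?_, ?_⟩
    · exact le_trans (le_max_left _ _) (le_max_left _ _)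
    · exact le_trans (le_max_right _ _) (le_max_left _ _)
    · intro u hu
      refine hR u (le_trans (le_abs_self R) (le_trans ?_ hu))
      have h1 := le_max_right (max (4 * (p + p / D k) + 4)
        (2 * p + 2 * p / δ k * Real.log (8 * ((k : ℝ) + 2)))) (2 * |R|)
      linarith
  choose! F hF1 hF2 hF3 using hstep
  obtain ⟨c, hc0, hcs⟩ : ∃ c : ℕ → ℝ, c 0 = 1 ∧ ∀ k, c (k + 1) = F k (c k) :=
    ⟨fun n => Nat.rec (motive := fun _ => ℝ) 1 (fun k ih => F k ih) n, rfl, fun _ => rfl⟩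
  have hcpos : ∀ k, 0 < c k := by
    intro k
    induction k with
    | zero => rw [hc0]; norm_num
    | succ k ih =>
      have h1 := hF1 k (c k) ih
      rw [hcs k]
      have h2 : 0 < c k / D k := div_pos ih (hDpos k)
      linarith
  obtain ⟨w, hw⟩ : ∃ w : ℕ → ℝ, ∀ k, w k = c k / D k := ⟨_, fun _ => rfl⟩
  have hwpos : ∀ k, 0 < w k := fun k => (hw k) ▸ div_pos (hcpos k) (hDpos k)
  have hwle : ∀ k, w k ≤ c k / 2 := by
    intro k
    rw [hw, div_le_div_iff₀ (hDpos k) two_pos]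
    nlinarith [hcpos k, hD2 k]
  have hc1 : ∀ k, 4 * (c k + w k) + 4 ≤ c (k + 1) := fun k => by
    rw [hcs, hw]; exact hF1 k (c k) (hcpos k)
  have hc2 : ∀ k, 2 * c k + 2 * c k / δ k * Real.log (8 * ((k : ℝ) + 2)) ≤ c (k + 1) :=
    fun k => by rw [hcs]; exact hF2 k (c k) (hcpos k)
  have hc3 : ∀ k (u : ℝ), c (k + 1) / 2 ≤ u → D (k + 1) ≤ h u := fun k u hu => by
    refine hF3 k (c k) (hcpos k) u ?_
    rw [← hcs]; exact hu
  have hcmono' : ∀ k, c k + w k + 1 ≤ c (k + 1) - w (k + 1) := by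
    intro k
    have h1 := hc1 k
    have h2 := hwle (k + 1)
    have h3 := hwpos k
    have h4 := hcpos k
    linarith
  have hgap : ∀ j k, j < k → c j + w j + 1 ≤ c k - w k := by
    intro j k hjk
    induction k with
    | zero => omega
    | succ k ih =>
      rcases Nat.lt_succ_iff_lt_or_eq.1 hjk with hlt | heq
      · have h1 := ih hlt
        have h2 := hcmono' k
        have h3 := hwpos k
        linarith
      · subst heq; exact hcmono' j
  have hcincr : ∀ j k, j ≤ k → c j ≤ c k := by
    intro j k hjk
    rcases eq_or_lt_of_le hjk with rfl | hlt
    · exact le_refl _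
    · have := hgap j k hlt
      have := hwpos j
      have := hwpos k
      linarith
  have hcge1 : ∀ k, 1 ≤ c k := fun k => hc0 ▸ hcincr 0 k (Nat.zero_le k)
  -- exponents
  obtain ⟨lam, hlam⟩ : ∃ lam : ℕ → ℝ, ∀ n, lam n = ∑ j ∈ Finset.range n, δ j / c j :=
    ⟨_, fun _ => rfl⟩
  have hlams : ∀ n, lam (n + 1) = lam n + δ n / c n := by
    intro n; rw [hlam, hlam, Finset.sum_range_succ]
  have hlamnonneg : ∀ n, 0 ≤ lam n := fun n => by
    rw [hlam]
    exact Finset.sum_nonneg fun j _ => (div_pos (hδpos j) (hcpos j)).le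
  have hlammono : StrictMono lam := strictMono_nat_of_lt_succ fun n => by
    rw [hlams]
    have := div_pos (hδpos n) (hcpos n)
    linarith
  -- terms
  obtain ⟨t, ht⟩ : ∃ t : ℕ → ℝ → ℝ, ∀ k u, t k u = Real.exp (u * lam k - μ k) :=
    ⟨_, fun _ _ => rfl⟩
  have htpos : ∀ k u, 0 < t k u := fun k u => (ht k u) ▸ Real.exp_pos _
  have hrat : ∀ k u, t (k + 1) u = t k u * Real.exp (δ k / c k * (u - c k)) := by
    intro k u
    rw [ht, ht, ← Real.exp_add]
    congr 1
    have e2 : δ k / c k * c k = δ k := div_mul_cancel₀ _ (ne_of_gt (hcpos k))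
    have e3 : δ k = μ (k + 1) - μ k := hδ k
    rw [hlams]
    linear_combination e2 + u * (0 : ℝ) + e3
  -- coefficients
  obtain ⟨a, ha⟩ : ∃ a : ℕ → ℂ, ∀ k, a k = ((Real.exp (-μ k) : ℝ) : ℂ) := ⟨_, fun _ => rfl⟩
  have haabs : ∀ k, ‖a k‖ = Real.exp (-μ k) := fun k => by
    rw [ha, Complex.norm_real, Real.norm_eq_abs, abs_of_pos (Real.exp_pos _)]
  have habs_t : ∀ k u, ‖a k‖ * Real.exp (u * lam k) = t k u := by
    intro k u
    rw [haabs, ← Real.exp_add, ht]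
    congr 1
    ring
  have hG : ∀ (u y : ℝ) (k : ℕ),
      a k * Complex.exp (((u : ℂ) + (y : ℂ) * Complex.I) * (lam k : ℂ))
        = ((t k u : ℝ) : ℂ) * Complex.exp (((y * lam k : ℝ) : ℂ) * Complex.I) := by
    intro u y k
    have e1 : ((u : ℂ) + (y : ℂ) * Complex.I) * (lam k : ℂ)
        = ((u * lam k : ℝ) : ℂ) + ((y * lam k : ℝ) : ℂ) * Complex.I := by
      push_cast; ring
    rw [e1, Complex.exp_add, ha, ← Complex.ofReal_exp, ← mul_assoc, ← Complex.ofReal_mul,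
      ← Real.exp_add, ht]
    congr 2
    ring
  have habsG : ∀ (u y : ℝ) (k : ℕ),
      ‖a k * Complex.exp (((u : ℂ) + (y : ℂ) * Complex.I) * (lam k : ℂ))‖ = t k u := by
    intro u y k
    rw [hG u y k, norm_mul, Complex.norm_real, Real.norm_eq_abs, abs_of_pos (htpos k u), Complex.norm_exp]
    simp
  -- growth of c
  have hcgek : ∀ k : ℕ, (k : ℝ) + 1 ≤ c k := by
    intro k
    induction k with
    | zero => simp [hc0]
    | succ k ih =>
      have h1 := hc1 k
      have h2 := hwpos k
      have h3 := hcpos k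
      push_cast
      linarith
  -- summability
  have hSum : ∀ u : ℝ, Summable fun k => t k u := by
    intro u
    apply summable_of_ratio_norm_eventually_le (r := Real.exp (-1))
    · calc Real.exp (-1) < Real.exp 0 := Real.exp_lt_exp.2 (by norm_num)
        _ = 1 := Real.exp_zero
    · obtain ⟨K, hK⟩ := exists_nat_ge (2 * u)
      filter_upwards [eventually_ge_atTop N, eventually_ge_atTop K] with k hk1 hk2
      rw [Real.norm_eq_abs, Real.norm_eq_abs, abs_of_pos (htpos _ u), abs_of_pos (htpos _ u),
        hrat]
      have hck := hcpos k
      have hq : δ k / c k * (u - c k) ≤ -1 := by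
        have h2u : 2 * u ≤ c k := by
          have : (K : ℝ) ≤ (k : ℝ) := Nat.cast_le.2 hk2
          have := hcgek k
          linarith
        have hδk := hN k hk1
        have hdiv : 0 ≤ δ k / c k := (div_pos (hδpos k) hck).le
        have h5 : u - c k ≤ -(c k / 2) := by linarith
        calc δ k / c k * (u - c k) ≤ δ k / c k * (-(c k / 2)) :=
              mul_le_mul_of_nonneg_left h5 hdiv
          _ = -(δ k / 2) := by field_simp
          _ ≤ -1 := by linarith
      calc t k u * Real.exp (δ k / c k * (u - c k)) ≤ t k u * Real.exp (-1) :=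
            mul_le_mul_of_nonneg_left (Real.exp_le_exp.2 hq) (htpos k u).le
        _ = Real.exp (-1) * t k u := mul_comm _ _
  have hSummableG : ∀ u y : ℝ,
      Summable fun k => a k * Complex.exp (((u : ℂ) + (y : ℂ) * Complex.I) * (lam k : ℂ)) := by
    intro u y
    apply Summable.of_norm
    have : (fun k => ‖a k * Complex.exp (((u : ℂ) + (y : ℂ) * Complex.I) * (lam k : ℂ))‖)
        = fun k => t k u := by
      funext k
      rw [← habsG u y k]
    rw [this]
    exact hSum u
  obtain ⟨S, hS⟩ : ∃ S : ℝ → ℝ, ∀ u, S u = ∑' k, t k u := ⟨_, fun _ => rfl⟩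
  have hSnonneg : ∀ u, 0 ≤ S u := fun u => (hS u) ▸ tsum_nonneg fun k => (htpos k u).le
  have hFval : ∀ u y, Fval a lam u y
      = ∑' k, a k * Complex.exp (((u : ℂ) + (y : ℂ) * Complex.I) * (lam k : ℂ)) :=
    fun u y => rfl
  have hFle : ∀ u y, ‖Fval a lam u y‖ ≤ S u := by
    intro u y
    rw [hFval, hS]
    have := norm_tsum_le_tsum_norm (f := fun k =>
      a k * Complex.exp (((u : ℂ) + (y : ℂ) * Complex.I) * (lam k : ℂ))) ?_
    · refine le_trans this (le_of_eq ?_)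
      exact tsum_congr fun k => by rw [habsG]
    · have : (fun k => ‖a k * Complex.exp (((u : ℂ) + (y : ℂ) * Complex.I) * (lam k : ℂ))‖)
          = fun k => t k u := by
        funext k; rw [habsG]
      rw [this]; exact hSum u
  have hF0 : ∀ u, ‖Fval a lam u 0‖ = S u := by
    intro u
    have e1 : Fval a lam u 0 = ((S u : ℝ) : ℂ) := by
      rw [hFval, hS, Complex.ofReal_tsum]
      refine tsum_congr fun k => ?_
      rw [hG u 0 k]
      simp
    rw [e1, Complex.norm_real, Real.norm_eq_abs, abs_of_nonneg (hSnonneg u)]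
  have hbddA : ∀ u, BddAbove (Set.range fun y : ℝ => ‖Fval a lam u y‖) := by
    intro u
    refine ⟨S u, ?_⟩
    rintro _ ⟨y, rfl⟩
    exact hFle u y
  have hSle_iSup : ∀ u, S u ≤ ⨆ y : ℝ, ‖Fval a lam u y‖ := by
    intro u
    rw [← hF0 u]
    exact le_ciSup (hbddA u) 0
  -- the set E
  obtain ⟨I, hI⟩ : ∃ I : ℕ → Set ℝ,
      ∀ m, I m = Set.Icc (c (N + m) - w (N + m)) (c (N + m) + w (N + m)) := ⟨_, fun _ => rfl⟩
  refine ⟨a, lam, ⋃ m, I m, 1 / 30, fun k => haabs k,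
    fun n m hnm => hlammono.injective.ne hnm,
    hlamnonneg,
    fun n => ⟨n + 1, hlammono n.lt_succ_self⟩,
    ?_, ?_, ?_, by norm_num, ?_, ?_⟩
  · -- summability
    intro x
    have : (fun n => ‖a n‖ * Real.exp (x * lam n)) = fun n => t n x := by
      funext n; exact habs_t n x
    rw [this]; exact hSum x
  · exact MeasurableSet.iUnion fun m => (hI m) ▸ measurableSet_Icc
  · -- E ⊆ Ici 0
    intro x hx
    obtain ⟨m, hm⟩ := Set.mem_iUnion.1 hx
    rw [hI] at hm
    have h1 := hm.1
    have h2 := hwle (N + m)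
    have h3 := hcge1 (N + m)
    simp only [Set.mem_Ici]
    linarith
  · -- main estimates
    intro x hx
    obtain ⟨m, hm⟩ := Set.mem_iUnion.1 hx
    rw [hI] at hm
    obtain ⟨hxl, hxr⟩ := hm
    set n : ℕ := N + m with hndef
    have hnN : N ≤ n := Nat.le_add_right N m
    have hn1 : 1 ≤ n := le_trans hN1 hnN
    have hδn := hN n hnN
    have hDn : D n = δ n := hDδ n hnN
    have hcn := hcpos n
    have hwn := hwpos n
    have hxpos : 0 < x := by
      have := hwle n
      have := hcge1 n
      linarith
    have hge : ∀ j, j < n → c j + w j + 1 ≤ x := fun j hj =>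
      le_trans (hgap j n hj) (by linarith)
    have hlex : ∀ j, n < j → x ≤ c j - w j - 1 := fun j hj => by
      have := hgap n j hj
      linarith
    -- upward chain below n
    have hup : ∀ j, j < n → t j x ≤ t (j + 1) x := by
      intro j hj
      rw [hrat]
      have h1 : 1 ≤ Real.exp (δ j / c j * (x - c j)) := by
        rw [Real.one_le_exp_iff]
        refine mul_nonneg (div_pos (hδpos j) (hcpos j)).le ?_
        have := hge j hj
        have := hwpos j
        linarith
      nlinarith [htpos j x]
    have hchain_up : ∀ j k, j ≤ k → k ≤ n → t j x ≤ t k x := by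
      intro j k hjk hkn
      induction k with
      | zero =>
        have : j = 0 := Nat.le_zero.1 hjk
        subst this; exact le_refl _
      | succ k ih =>
        rcases Nat.lt_succ_iff_lt_or_eq.1 (Nat.lt_succ_of_le hjk) with hlt | heq
        · exact le_trans (ih (Nat.lt_succ_iff.1 hlt) (le_trans (Nat.le_succ k) hkn))
            (hup k (Nat.lt_of_succ_le hkn))
        · subst heq; exact le_refl _
    -- smallness below n
    have hbelow : ∀ j, j < n → t j x ≤ t n x / (8 * ((n : ℝ) + 1)) := by
      intro j hj
      obtain ⟨p, hp⟩ : ∃ p, n = p + 1 := ⟨n - 1, by omega⟩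
      have hcp := hcpos p
      have hδp := hδpos p
      have h8 : (0 : ℝ) < 8 * ((n : ℝ) + 1) := by positivity
      have hL : Real.log (8 * ((n : ℝ) + 1)) ≤ δ p / c p * (x - c p) := by
        have hq := hc2 p
        have hwn' : w n ≤ c n / 2 := hwle n
        have hxc : c n / 2 ≤ x := by linarith
        have hcast : ((p : ℝ) + 2) = (n : ℝ) + 1 := by rw [hp]; push_cast; ring
        rw [← hcast]
        have hx2 : c p + c p / δ p * Real.log (8 * ((p : ℝ) + 2)) ≤ x := by
          rw [← hp] at hq
          have e : 2 * c p / δ p * Real.log (8 * ((p : ℝ) + 2))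
              = 2 * (c p / δ p * Real.log (8 * ((p : ℝ) + 2))) := by ring
          rw [e] at hq
          linarith
        have hmul : δ p / c p * (c p / δ p * Real.log (8 * ((p : ℝ) + 2)))
            = Real.log (8 * ((p : ℝ) + 2)) := by field_simp
        calc Real.log (8 * ((p : ℝ) + 2))
            = δ p / c p * (c p / δ p * Real.log (8 * ((p : ℝ) + 2))) := hmul.symm
          _ ≤ δ p / c p * (x - c p) := by
              refine mul_le_mul_of_nonneg_left ?_ (div_pos hδp hcp).le
              linarith
      have hpn : t p x ≤ t n x / (8 * ((n : ℝ) + 1)) := by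
        rw [le_div_iff₀ h8]
        have hrp : t n x = t p x * Real.exp (δ p / c p * (x - c p)) := by
          rw [hp]; exact hrat p x
        have hexp : 8 * ((n : ℝ) + 1) ≤ Real.exp (δ p / c p * (x - c p)) := by
          calc 8 * ((n : ℝ) + 1) = Real.exp (Real.log (8 * ((n : ℝ) + 1))) :=
                (Real.exp_log h8).symm
            _ ≤ _ := Real.exp_le_exp.2 hL
        nlinarith [htpos p x]
      exact le_trans (hchain_up j p (by omega) (by omega)) hpn
    -- B
    have hBnonneg : 0 ≤ ∑ j ∈ Finset.range n, t j x :=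
      Finset.sum_nonneg fun j _ => (htpos j x).le
    have hB : ∑ j ∈ Finset.range n, t j x ≤ t n x / 8 := by
      have h1 := Finset.sum_le_card_nsmul (Finset.range n) (fun j => t j x)
        (t n x / (8 * ((n : ℝ) + 1))) (fun j hj => hbelow j (Finset.mem_range.1 hj))
      rw [Finset.card_range, nsmul_eq_mul] at h1
      refine le_trans h1 ?_
      have e : (n : ℝ) * (t n x / (8 * ((n : ℝ) + 1))) = ((n : ℝ) * t n x) / (8 * ((n : ℝ) + 1)) := by
        ring
      rw [e, div_le_div_iff₀ (by positivity) (by norm_num : (0:ℝ) < 8)]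
      have := (htpos n x).le
      have hnn : (0 : ℝ) ≤ (n : ℝ) := Nat.cast_nonneg n
      nlinarith
    -- pair comparability
    have hdivn : 0 ≤ δ n / c n := (div_pos (hδpos n) hcn).le
    have hwn1 : δ n / c n * w n = 1 := by
      have e1 : c n ≠ 0 := ne_of_gt hcn
      have e2 : δ n ≠ 0 := ne_of_gt (hδpos n)
      rw [hw, hDn]
      field_simp
    have hexp1 : Real.exp 1 ≤ 3 := by
      have := Real.exp_one_lt_d9
      linarith
    have hexpm1 : (1 : ℝ) / 3 ≤ Real.exp (-1) := by
      rw [Real.exp_neg, one_div]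
      exact inv_anti₀ (Real.exp_pos 1) hexp1
    have hpair1 : t (n + 1) x ≤ Real.exp 1 * t n x := by
      rw [hrat]
      have hq : δ n / c n * (x - c n) ≤ 1 := by
        have h5 : x - c n ≤ w n := by linarith
        calc δ n / c n * (x - c n) ≤ δ n / c n * w n := mul_le_mul_of_nonneg_left h5 hdivn
          _ = 1 := hwn1
      calc t n x * Real.exp (δ n / c n * (x - c n)) ≤ t n x * Real.exp 1 :=
            mul_le_mul_of_nonneg_left (Real.exp_le_exp.2 hq) (htpos n x).le
        _ = Real.exp 1 * t n x := mul_comm _ _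
    have hpair2 : Real.exp (-1) * t n x ≤ t (n + 1) x := by
      rw [hrat]
      have hq : -1 ≤ δ n / c n * (x - c n) := by
        have h5 : -w n ≤ x - c n := by linarith
        calc (-1 : ℝ) = δ n / c n * (-w n) := by rw [mul_neg, hwn1]
          _ ≤ δ n / c n * (x - c n) := mul_le_mul_of_nonneg_left h5 hdivn
      calc Real.exp (-1) * t n x = t n x * Real.exp (-1) := mul_comm _ _
        _ ≤ t n x * Real.exp (δ n / c n * (x - c n)) :=
            mul_le_mul_of_nonneg_left (Real.exp_le_exp.2 hq) (htpos n x).le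
    have h3a : t n x ≤ 3 * t (n + 1) x := by nlinarith [htpos n x]
    have h3b : t (n + 1) x ≤ 3 * t n x := by nlinarith [htpos n x, Real.exp_pos 1]
    -- decay above n
    have hdown : ∀ j, n < j → t (j + 1) x ≤ Real.exp (-1) * t j x := by
      intro j hj
      rw [hrat]
      have hjN : N ≤ j := le_trans hnN (le_of_lt hj)
      have hDj : D j = δ j := hDδ j hjN
      have hcj := hcpos j
      have hwj1 : δ j / c j * w j = 1 := by
        have e1 : c j ≠ 0 := ne_of_gt hcj
        have e2 : δ j ≠ 0 := ne_of_gt (hδpos j)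
        rw [hw, hDj]; field_simp
      have hq : δ j / c j * (x - c j) ≤ -1 := by
        have h5 : x - c j ≤ -w j := by
          have := hlex j hj
          linarith
        calc δ j / c j * (x - c j) ≤ δ j / c j * (-w j) :=
              mul_le_mul_of_nonneg_left h5 (div_pos (hδpos j) hcj).le
          _ = -1 := by rw [mul_neg, hwj1]
      calc t j x * Real.exp (δ j / c j * (x - c j)) ≤ t j x * Real.exp (-1) :=
            mul_le_mul_of_nonneg_left (Real.exp_le_exp.2 hq) (htpos j x).le
        _ = Real.exp (-1) * t j x := mul_comm _ _
    have hstep2 : t (n + 2) x ≤ Real.exp (-3) * t (n + 1) x := by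
      have e1 : t (n + 2) x = t (n + 1) x * Real.exp (δ (n + 1) / c (n + 1) * (x - c (n + 1))) :=
        hrat (n + 1) x
      have hδ1 : 100 ≤ δ (n + 1) := hN (n + 1) (by omega)
      have hc1' := hc1 n
      have hc1p := hcpos (n + 1)
      have hq : δ (n + 1) / c (n + 1) * (x - c (n + 1)) ≤ -3 := by
        have h5 : x - c (n + 1) ≤ -(3 / 4) * c (n + 1) := by linarith
        calc δ (n + 1) / c (n + 1) * (x - c (n + 1))
            ≤ δ (n + 1) / c (n + 1) * (-(3 / 4) * c (n + 1)) :=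
              mul_le_mul_of_nonneg_left h5 (div_pos (hδpos (n + 1)) hc1p).le
          _ = -(3 / 4) * δ (n + 1) := by field_simp
          _ ≤ -3 := by linarith
      rw [e1]
      calc t (n + 1) x * Real.exp (δ (n + 1) / c (n + 1) * (x - c (n + 1)))
          ≤ t (n + 1) x * Real.exp (-3) :=
            mul_le_mul_of_nonneg_left (Real.exp_le_exp.2 hq) (htpos (n + 1) x).le
        _ = Real.exp (-3) * t (n + 1) x := mul_comm _ _
    have hgeo : ∀ i : ℕ, t (i + (n + 2)) x ≤ t (n + 2) x * Real.exp (-1) ^ i := by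
      intro i
      induction i with
      | zero => simp
      | succ i ih =>
        have e1 : i + 1 + (n + 2) = (i + (n + 2)) + 1 := by omega
        rw [e1]
        calc t ((i + (n + 2)) + 1) x ≤ Real.exp (-1) * t (i + (n + 2)) x :=
              hdown (i + (n + 2)) (by omega)
          _ ≤ Real.exp (-1) * (t (n + 2) x * Real.exp (-1) ^ i) :=
              mul_le_mul_of_nonneg_left ih (Real.exp_pos _).le
          _ = t (n + 2) x * Real.exp (-1) ^ (i + 1) := by ring
    have hem1 : Real.exp (-1) ≤ 1 / 2 := by
      have h2 : (2 : ℝ) ≤ Real.exp 1 := by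
        have := Real.add_one_le_exp 1
        linarith
      calc Real.exp (-1) = (Real.exp 1)⁻¹ := Real.exp_neg 1
        _ ≤ 2⁻¹ := inv_anti₀ two_pos h2
        _ = 1 / 2 := by norm_num

    have hexp3 : Real.exp (-3) ≤ 1 / 8 := by
      have h2 : (2 : ℝ) ≤ Real.exp 1 := by
        have := Real.add_one_le_exp 1
        linarith
      have h8 : (8 : ℝ) ≤ Real.exp 3 := by
        have e : Real.exp 3 = Real.exp 1 * Real.exp 1 * Real.exp 1 := by
          rw [← Real.exp_add, ← Real.exp_add]; norm_num
        nlinarith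
      calc Real.exp (-3) = (Real.exp 3)⁻¹ := Real.exp_neg 3
        _ ≤ 8⁻¹ := inv_anti₀ (by norm_num) h8
        _ = 1 / 8 := by norm_num
    have hT2sum : Summable fun i => t (i + (n + 2)) x :=
      (summable_nat_add_iff (n + 2)).2 (hSum x)
    have hgeosum : Summable fun i : ℕ => t (n + 2) x * Real.exp (-1) ^ i :=
      (summable_geometric_of_lt_one (Real.exp_pos _).le (by linarith [hem1])).mul_left _
    have hT2a : (∑' i, t (i + (n + 2)) x) ≤ t (n + 2) x * (1 - Real.exp (-1))⁻¹ := by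
      calc (∑' i, t (i + (n + 2)) x) ≤ ∑' i, t (n + 2) x * Real.exp (-1) ^ i :=
            Summable.tsum_le_tsum hgeo hT2sum hgeosum
        _ = t (n + 2) x * ∑' i, Real.exp (-1) ^ i := tsum_mul_left
        _ = t (n + 2) x * (1 - Real.exp (-1))⁻¹ := by
            rw [tsum_geometric_of_lt_one (Real.exp_pos _).le (by linarith [hem1])]
    have hinv2 : (1 - Real.exp (-1))⁻¹ ≤ 2 := by
      have hpos : 0 < 1 - Real.exp (-1) := by linarith [hem1]
      rw [← one_div, div_le_iff₀ hpos]
      linarith [hem1]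
    have hT2nonneg : 0 ≤ ∑' i, t (i + (n + 2)) x := tsum_nonneg fun i => (htpos _ x).le
    have hT2 : (∑' i, t (i + (n + 2)) x) ≤ t (n + 1) x / 4 := by
      have h1 := htpos (n + 2) x
      have h2 := htpos (n + 1) x
      calc (∑' i, t (i + (n + 2)) x) ≤ t (n + 2) x * (1 - Real.exp (-1))⁻¹ := hT2a
        _ ≤ t (n + 2) x * 2 := mul_le_mul_of_nonneg_left hinv2 h1.le
        _ ≤ (Real.exp (-3) * t (n + 1) x) * 2 := mul_le_mul_of_nonneg_right hstep2 (by norm_num)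
        _ ≤ (1 / 8 * t (n + 1) x) * 2 := by nlinarith
        _ = t (n + 1) x / 4 := by ring
    have hsplit : S x = (∑ j ∈ Finset.range n, t j x) + t n x + t (n + 1) x
        + ∑' i, t (i + (n + 2)) x := by
      rw [hS, ← Summable.sum_add_tsum_nat_add (n + 2) (hSum x), Finset.sum_range_succ,
        Finset.sum_range_succ]
    have hP : 0 < t n x + t (n + 1) x := add_pos (htpos n x) (htpos (n + 1) x)
    constructor
    · -- first inequality
      have hsup : (⨆ k : ℕ, ‖a k‖ * Real.exp (x * lam k))
          ≤ 3 / 4 * (t n x + t (n + 1) x) := by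
        apply ciSup_le
        intro k
        rw [habs_t]
        rcases le_or_gt k n with hk | hk
        · have h1 := hchain_up k n hk (le_refl n)
          linarith [h3a]
        · rcases eq_or_lt_of_le (Nat.succ_le_of_lt hk) with heq | hk2
          · rw [← heq]
            linarith [h3b]
          · obtain ⟨i, hi⟩ : ∃ i, k = i + (n + 2) := ⟨k - (n + 2), by omega⟩
            have h1 : t k x ≤ t (n + 2) x * Real.exp (-1) ^ i := hi ▸ hgeo i
            have h2 : Real.exp (-1) ^ i ≤ 1 :=
              pow_le_one₀ (Real.exp_pos _).le (by linarith [hem1])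
            have h3 := htpos (n + 2) x
            have h4 := htpos (n + 1) x
            have h5 : t (n + 2) x ≤ 1 / 8 * t (n + 1) x := by nlinarith [hstep2]
            nlinarith
      have hfinal : (1 + 1 / 30 : ℝ) * (3 / 4 * (t n x + t (n + 1) x)) ≤ S x := by
        rw [hsplit]
        linarith [hBnonneg, hT2nonneg, hP]
      calc (1 + 1 / 30 : ℝ) * (⨆ k : ℕ, ‖a k‖ * Real.exp (x * lam k))
          ≤ (1 + 1 / 30) * (3 / 4 * (t n x + t (n + 1) x)) :=
            mul_le_mul_of_nonneg_left hsup (by norm_num)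
        _ ≤ S x := hfinal
        _ ≤ ⨆ y : ℝ, ‖Fval a lam x y‖ := hSle_iSup x
    · -- second inequality
      obtain ⟨ys, hys⟩ : ∃ ys : ℝ, ys = Real.pi * c n / δ n := ⟨_, rfl⟩
      have hinfle : (⨅ y : ℝ, ‖Fval a lam x y‖) ≤ ‖Fval a lam x ys‖ := by
        refine ciInf_le ⟨0, ?_⟩ ys
        rintro v ⟨y, rfl⟩
        exact norm_nonneg _
      have habsdiff : |t n x - t (n + 1) x| ≤ (t n x + t (n + 1) x) / 2 :=
        abs_le.2 ⟨by linarith [h3b], by linarith [h3a]⟩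
      have hpairabs : ‖a n * Complex.exp (((x : ℂ) + (ys : ℂ) * Complex.I) * (lam n : ℂ))
            + a (n + 1) * Complex.exp (((x : ℂ) + (ys : ℂ) * Complex.I) * (lam (n + 1) : ℂ))‖
          = |t n x - t (n + 1) x| := by
        rw [hG x ys n, hG x ys (n + 1)]
        have e2 : δ n ≠ 0 := ne_of_gt (hδpos n)
        have e3 : c n ≠ 0 := ne_of_gt hcn
        have e1 : (ys * lam (n + 1) : ℝ) = ys * lam n + Real.pi := by
          rw [hlams, hys]
          field_simp
        rw [e1]
        have e4 : ((ys * lam n + Real.pi : ℝ) : ℂ) * Complex.I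
            = ((ys * lam n : ℝ) : ℂ) * Complex.I + (Real.pi : ℂ) * Complex.I := by
          push_cast; ring
        rw [e4, Complex.exp_add, Complex.exp_pi_mul_I]
        have e5 : ((t n x : ℝ) : ℂ) * Complex.exp (((ys * lam n : ℝ) : ℂ) * Complex.I)
            + ((t (n + 1) x : ℝ) : ℂ)
              * (Complex.exp (((ys * lam n : ℝ) : ℂ) * Complex.I) * (-1))
            = Complex.exp (((ys * lam n : ℝ) : ℂ) * Complex.I)
              * (((t n x - t (n + 1) x : ℝ) : ℂ)) := by
          push_cast; ring
        rw [e5, norm_mul, Complex.norm_exp, Complex.norm_real]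
        simp
      have hFys : ‖Fval a lam x ys‖
          ≤ (∑ j ∈ Finset.range n, t j x) + (t n x + t (n + 1) x) / 2
            + ∑' i, t (i + (n + 2)) x := by
        rw [hFval]
        have hGsum : Summable fun k =>
            a k * Complex.exp (((x : ℂ) + (ys : ℂ) * Complex.I) * (lam k : ℂ)) :=
          hSummableG x ys
        have hsplitG : (∑' k, a k * Complex.exp (((x : ℂ) + (ys : ℂ) * Complex.I) * (lam k : ℂ)))
            = ((∑ j ∈ Finset.range n,
                  a j * Complex.exp (((x : ℂ) + (ys : ℂ) * Complex.I) * (lam j : ℂ)))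
                + (a n * Complex.exp (((x : ℂ) + (ys : ℂ) * Complex.I) * (lam n : ℂ))
                  + a (n + 1) * Complex.exp (((x : ℂ) + (ys : ℂ) * Complex.I) * (lam (n + 1) : ℂ))))
              + ∑' i, a (i + (n + 2))
                  * Complex.exp (((x : ℂ) + (ys : ℂ) * Complex.I) * (lam (i + (n + 2)) : ℂ)) := by
          rw [← Summable.sum_add_tsum_nat_add (n + 2) hGsum, Finset.sum_range_succ, Finset.sum_range_succ]
          ring
        rw [hsplitG]
        have hA : ‖∑ j ∈ Finset.range n,
              a j * Complex.exp (((x : ℂ) + (ys : ℂ) * Complex.I) * (lam j : ℂ))‖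
            ≤ ∑ j ∈ Finset.range n, t j x := by
          refine le_trans (norm_sum_le _ _) (le_of_eq ?_)
          exact Finset.sum_congr rfl fun j _ => habsG x ys j
        have hTail : ‖∑' i, a (i + (n + 2))
              * Complex.exp (((x : ℂ) + (ys : ℂ) * Complex.I) * (lam (i + (n + 2)) : ℂ))‖
            ≤ ∑' i, t (i + (n + 2)) x := by
          have hnrm : (fun i => ‖a (i + (n + 2))
              * Complex.exp (((x : ℂ) + (ys : ℂ) * Complex.I) * (lam (i + (n + 2)) : ℂ))‖)
              = fun i => t (i + (n + 2)) x := by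
            funext i
            rw [habsG]
          refine le_trans (norm_tsum_le_tsum_norm ?_) (le_of_eq ?_)
          · rw [hnrm]; exact hT2sum
          · rw [hnrm]
        calc ‖_‖ ≤ ‖(∑ j ∈ Finset.range n,
                a j * Complex.exp (((x : ℂ) + (ys : ℂ) * Complex.I) * (lam j : ℂ)))
                + (a n * Complex.exp (((x : ℂ) + (ys : ℂ) * Complex.I) * (lam n : ℂ))
                  + a (n + 1) * Complex.exp (((x : ℂ) + (ys : ℂ) * Complex.I) * (lam (n + 1) : ℂ)))‖
              + ‖∑' i, a (i + (n + 2))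
                  * Complex.exp (((x : ℂ) + (ys : ℂ) * Complex.I) * (lam (i + (n + 2)) : ℂ))‖ :=
            norm_add_le _ _
          _ ≤ (‖∑ j ∈ Finset.range n,
                a j * Complex.exp (((x : ℂ) + (ys : ℂ) * Complex.I) * (lam j : ℂ))‖
              + ‖a n * Complex.exp (((x : ℂ) + (ys : ℂ) * Complex.I) * (lam n : ℂ))
                  + a (n + 1) * Complex.exp (((x : ℂ) + (ys : ℂ) * Complex.I) * (lam (n + 1) : ℂ))‖)
              + ‖∑' i, a (i + (n + 2))
                  * Complex.exp (((x : ℂ) + (ys : ℂ) * Complex.I) * (lam (i + (n + 2)) : ℂ))‖ := by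
            gcongr
            exact norm_add_le _ _
          _ ≤ ((∑ j ∈ Finset.range n, t j x) + (t n x + t (n + 1) x) / 2)
              + ∑' i, t (i + (n + 2)) x := by
            rw [hpairabs]
            gcongr
          _ = (∑ j ∈ Finset.range n, t j x) + (t n x + t (n + 1) x) / 2
              + ∑' i, t (i + (n + 2)) x := by ring
      have hfinal2 : (1 + 1 / 30 : ℝ) * ‖Fval a lam x ys‖ ≤ S x := by
        have hBle : (∑ j ∈ Finset.range n, t j x) ≤ (t n x + t (n + 1) x) / 8 := by
          have := htpos (n + 1) x
          linarith [hB]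
        have hT2le : (∑' i, t (i + (n + 2)) x) ≤ (t n x + t (n + 1) x) / 4 := by
          have := htpos n x
          linarith [hT2]
        have h6 := mul_le_mul_of_nonneg_left hFys (by norm_num : (0 : ℝ) ≤ 1 + 1 / 30)
        rw [hsplit]
        have h7 := norm_nonneg (Fval a lam x ys)
        linarith
      calc (1 + 1 / 30 : ℝ) * (⨅ y : ℝ, ‖Fval a lam x y‖)
          ≤ (1 + 1 / 30) * ‖Fval a lam x ys‖ :=
            mul_le_mul_of_nonneg_left hinfle (by norm_num)
        _ ≤ S x := hfinal2
        _ ≤ ⨆ y : ℝ, ‖Fval a lam x y‖ := hSle_iSup x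
  · -- infinite logarithmic measure
    have hEsub1 : (⋃ m, I m) ⊆ Set.Ici 1 := by
      intro u hu
      obtain ⟨m, hm⟩ := Set.mem_iUnion.1 hu
      rw [hI] at hm
      have h1 := hm.1
      have h2 := hwle (N + m)
      have h3 : 8 ≤ c (N + m) := by
        have h4 := hc1 0
        have h5 := hwpos 0
        have h7 : c 1 ≤ c (N + m) := hcincr 1 (N + m) (by omega)
        rw [hc0] at h4
        linarith
      simp only [Set.mem_Ici]
      linarith
    rw [Set.inter_eq_left.2 hEsub1]
    have hcol : ∀ m : ℕ, MeasurableSet (I m) := fun m => (hI m) ▸ measurableSet_Icc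
    have hdisj : Pairwise (Function.onFun Disjoint I) := by
      have key : ∀ m m' : ℕ, m < m' → Disjoint (I m) (I m') := by
        intro m m' hmm
        rw [hI, hI, Set.disjoint_left]
        rintro u ⟨hu1, hu2⟩ ⟨hu3, hu4⟩
        have := hgap (N + m) (N + m') (by omega)
        linarith
      intro m m' hne
      rcases lt_or_gt_of_ne hne with hlt | hgt
      · exact key m m' hlt
      · exact (key m' m hgt).symm
    rw [lintegral_iUnion hcol hdisj]
    have hone : ∀ m : ℕ, (1 : ENNReal) ≤ ∫⁻ u in I m, ENNReal.ofReal (h u / u) := by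
      intro m
      obtain ⟨p, hp⟩ : ∃ p, N + m = p + 1 := ⟨N + m - 1, by omega⟩
      have hcn := hcpos (N + m)
      have hwn := hwpos (N + m)
      have hwn2 := hwle (N + m)
      have hcn1 := hcge1 (N + m)
      have hlow : ∀ u ∈ I m, ENNReal.ofReal (D (N + m) / (c (N + m) + w (N + m)))
          ≤ ENNReal.ofReal (h u / u) := by
        intro u hu
        rw [hI] at hu
        obtain ⟨hu1, hu2⟩ := hu
        have hupos : 0 < u := by linarith
        have hhu : D (N + m) ≤ h u := by
          rw [hp]
          refine hc3 p u ?_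
          rw [← hp]
          linarith
        refine ENNReal.ofReal_le_ofReal ?_
        refine div_le_div₀ ?_ hhu hupos (by linarith)
        linarith [hD2 (N + m)]
      have hint1 : ENNReal.ofReal (D (N + m) / (c (N + m) + w (N + m))) * volume (I m)
          ≤ ∫⁻ u in I m, ENNReal.ofReal (h u / u) := by
        rw [← setLIntegral_const (I m) _]
        refine lintegral_mono_ae ?_
        rw [ae_restrict_iff' (hcol m)]
        exact ae_of_all _ hlow
      have hvol : volume (I m) = ENNReal.ofReal (2 * w (N + m)) := by
        rw [hI, Real.volume_Icc]
        congr 1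
        ring
      refine le_trans ?_ hint1
      rw [hvol, ← ENNReal.ofReal_mul (div_nonneg (hDpos (N + m)).le (by linarith))]
      rw [show (1 : ENNReal) = ENNReal.ofReal 1 by simp]
      refine ENNReal.ofReal_le_ofReal ?_
      have hDw : D (N + m) * w (N + m) = c (N + m) := by
        have hne : D (N + m) ≠ 0 := ne_of_gt (hDpos (N + m))
        rw [hw]
        field_simp
      rw [div_mul_eq_mul_div, le_div_iff₀ (by linarith)]
      nlinarith [hDw]
    refine top_unique ?_
    calc (⊤ : ENNReal) = ∑' _ : ℕ, (1 : ENNReal) :=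
          (ENNReal.tsum_const_eq_top_of_ne_zero one_ne_zero).symm
      _ ≤ ∑' m, ∫⁻ u in I m, ENNReal.ofReal (h u / u) := ENNReal.tsum_le_tsum hone
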